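/- Let q ∈ ℂ with |q| > 1, K = ℂ((z)) with σ_q, and let (M, Φ) be a q-difference module over K whose Newton polygon has a single slope μ ∈ ℤ (M pure of slope μ). Let x be a cyclic vector of M and Λ = Σ_{i=0}^{n-1} O·Ψ^i(x) where Ψ = z^{-μ}Φ and O = ℂ[[z]]. Then v_Λ(Φ^k(x)) = μk + O(1) as k → ∞ in ℕ, where v_Λ(y) = sup{j ∈ ℤ : y ∈ z^j Λ}. -/

import Mathlib

open HahnSeries PowerSeries

lemma ofPS_coeff_neg17 (f : PowerSeries ℂ) (k : ℤ) (hk : k < 0) :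
    (HahnSeries.ofPowerSeries ℤ ℂ f).coeff k = 0 := by
  rw [HahnSeries.ofPowerSeries_apply, HahnSeries.embDomain_notin_range]
  rintro ⟨m, hm⟩
  simp at hm
  omega

noncomputable def tau17 (q : ℂ) : PowerSeries ℂ → PowerSeries ℂ :=
  fun f => PowerSeries.mk fun k => q ^ k * PowerSeries.coeff k f

lemma tau17_const (q : ℂ) (f : PowerSeries ℂ) :
    PowerSeries.constantCoeff (tau17 q f) = PowerSeries.constantCoeff f := by
  simp [tau17, ← PowerSeries.coeff_zero_eq_constantCoeff]

lemma tau17_zero (q : ℂ) : tau17 q 0 = 0 := by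
  ext k; simp [tau17]

lemma tau17_one (q : ℂ) : tau17 q 1 = 1 := by
  ext k
  simp only [tau17, PowerSeries.coeff_mk, PowerSeries.coeff_one]
  split <;> simp_all

noncomputable def b17 (q : ℂ) (n : ℕ) (a : ℕ → PowerSeries ℂ) : ℕ → ℕ → PowerSeries ℂ
  | 0 => fun i => if i = 0 then 1 else 0
  | (k+1) => fun i =>
      (if 1 ≤ i then tau17 q (b17 q n a k (i-1)) else 0)
        - tau17 q (b17 q n a k (n-1)) * a (n - i)

lemma key17 (n : ℕ) (hn : 1 ≤ n) (A : ℕ → ℂ) (β : ℕ → ℕ → ℂ)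
    (h0 : ∀ i, β 0 i = if i = 0 then 1 else 0)
    (hrec : ∀ k i, β (k+1) i = (if 1 ≤ i then β k (i-1) else 0) - β k (n-1) * A (n-i))
    (hp : ∃ j, 1 ≤ j ∧ j ≤ n ∧ A j ≠ 0) :
    ∀ k, ∃ i, i < n ∧ β k i ≠ 0 := by
  classical
  obtain ⟨j0, hj01, hj0n, hj0⟩ := hp
  set S : Finset ℕ := (Finset.Icc 1 n).filter (fun j => A j ≠ 0) with hS
  have hSne : S.Nonempty := ⟨j0, by simp [hS, Finset.mem_filter, Finset.mem_Icc, hj01, hj0n, hj0]⟩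
  set m : ℕ := S.max' hSne with hm
  have hmS : m ∈ S := S.max'_mem hSne
  have hm1 : 1 ≤ m := (Finset.mem_Icc.1 (Finset.mem_filter.1 hmS).1).1
  have hmn : m ≤ n := (Finset.mem_Icc.1 (Finset.mem_filter.1 hmS).1).2
  have hAm : A m ≠ 0 := (Finset.mem_filter.1 hmS).2
  have hmax : ∀ j, m < j → j ≤ n → A j = 0 := by
    intro j hj hjn
    by_contra h
    have : j ∈ S := Finset.mem_filter.2 ⟨Finset.mem_Icc.2 ⟨by omega, hjn⟩, h⟩
    exact absurd (S.le_max' j this) (by omega)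
  have claimA : ∀ k, k < n → ∀ i, β k i = if i = k then 1 else 0 := by
    intro k
    induction k with
    | zero => intro _ i; exact h0 i
    | succ k ih =>
      intro hk i
      have hkn : k < n := by omega
      rw [hrec, ih hkn, ih hkn]
      have h1 : (if n - 1 = k then (1:ℂ) else 0) = 0 := by rw [if_neg]; omega
      rw [h1, zero_mul, sub_zero]
      by_cases h : 1 ≤ i
      · rw [if_pos h]
        by_cases h2 : i - 1 = k
        · rw [if_pos h2, if_pos (by omega)]
        · rw [if_neg h2, if_neg (by omega)]
      · rw [if_neg h, if_neg (by omega)]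
  have claimB : ∀ k, n - m ≤ k →
      (∀ i, i < n - m → β k i = 0) ∧ (∃ i, i < n ∧ β k i ≠ 0) := by
    intro k hk
    induction k with
    | zero =>
      refine ⟨fun i hi => by omega, ⟨0, by omega, by rw [h0]; simp⟩⟩
    | succ k ih =>
      by_cases hk' : n - m ≤ k
      · obtain ⟨ihV, ihNZ⟩ := ih hk'
        constructor
        · intro i hi
          rw [hrec]
          have hA : A (n - i) = 0 := hmax _ (by omega) (by omega)
          rw [hA, mul_zero, sub_zero]
          by_cases h : 1 ≤ i
          · rw [if_pos h]; exact ihV _ (by omega)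
          · rw [if_neg h]
        · by_contra h
          push_neg at h
          have hβn1 : β k (n-1) = 0 := by
            have := h (n - m) (by omega)
            rw [hrec] at this
            have hnm : n - (n - m) = m := by omega
            rw [hnm] at this
            have h1 : (if 1 ≤ n - m then β k (n - m - 1) else 0) = 0 := by
              split
              · exact ihV _ (by omega)
              · rfl
            rw [h1, zero_sub, neg_eq_zero] at this
            exact (mul_eq_zero.1 this).resolve_right hAm
          obtain ⟨i0, hi0n, hi0⟩ := ihNZ
          apply hi0
          by_cases hi0' : i0 = n - 1
          · rw [hi0']; exact hβn1
          · have := h (i0 + 1) (by omega)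
            rw [hrec, hβn1, zero_mul, sub_zero, if_pos (by omega)] at this
            simpa using this
      · have hA' := claimA (k+1) (by omega)
        constructor
        · intro i hi
          rw [hA', if_neg (by omega)]
        · exact ⟨k+1, by omega, by rw [hA', if_pos rfl]; exact one_ne_zero⟩
  intro k
  by_cases h : n - m ≤ k
  · exact (claimB k h).2
  · exact ⟨k, by omega, by rw [claimA k (by omega), if_pos rfl]; exact one_ne_zero⟩

set_option maxHeartbeats 2000000 in
theorem stmt_17 (q : ℂ) (hq : 1 < ‖q‖)
    (σ : RingAut (LaurentSeries ℂ))
    (hσ : ∀ (f : LaurentSeries ℂ) (k : ℤ), (σ f).coeff k = q ^ k * f.coeff k)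
    (n : ℕ) (hn : 1 ≤ n) (μ : ℤ)
    (Φ Ψ : (Fin n → LaurentSeries ℂ) → Fin n → LaurentSeries ℂ)
    (hΦbij : Function.Bijective Φ)
    (hΦadd : ∀ x y, Φ (x + y) = Φ x + Φ y)
    (hΦsmul : ∀ (c : LaurentSeries ℂ) (x : Fin n → LaurentSeries ℂ), Φ (c • x) = σ c • Φ x)
    (hΨ : ∀ y, Ψ y = (HahnSeries.single (-μ) (1 : ℂ) : LaurentSeries ℂ) • Φ y)
    (x : Fin n → LaurentSeries ℂ)
    (hcyc : LinearIndependent (LaurentSeries ℂ) fun i : Fin n => Ψ^[(i : ℕ)] x)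
    (a : ℕ → PowerSeries ℂ)
    (hmin : Ψ^[n] x + ∑ i ∈ Finset.Icc 1 n,
        (HahnSeries.ofPowerSeries ℤ ℂ (a i)) • Ψ^[n - i] x = 0)
    (hpure : ∃ i ∈ Finset.Icc 1 n, PowerSeries.constantCoeff (a i) ≠ 0) :
    ∃ C : ℤ, 0 ≤ C ∧ ∀ k : ℕ,
      (∃ c : Fin n → PowerSeries ℂ,
        Φ^[k] x = (HahnSeries.single (μ * k - C) (1 : ℂ) : LaurentSeries ℂ) •
          ∑ i : Fin n, (HahnSeries.ofPowerSeries ℤ ℂ (c i)) • Ψ^[(i : ℕ)] x) ∧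
      ¬ ∃ c : Fin n → PowerSeries ℂ,
        Φ^[k] x = (HahnSeries.single (μ * k + C) (1 : ℂ) : LaurentSeries ℂ) •
          ∑ i : Fin n, (HahnSeries.ofPowerSeries ℤ ℂ (c i)) • Ψ^[(i : ℕ)] x := by
  classical
  have hq0 : q ≠ 0 := by
    intro h
    rw [h] at hq
    simp only [norm_zero] at hq
    norm_num at hq
  have Hss : ∀ (c d : LaurentSeries ℂ) (v : Fin n → LaurentSeries ℂ),
      c • (d • v) = (c * d) • v := fun c d v => funext fun j => (mul_assoc c d (v j)).symm
  have Hsa : ∀ (c : LaurentSeries ℂ) (v w : Fin n → LaurentSeries ℂ),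
      c • (v + w) = c • v + c • w := fun c v w => funext fun j => mul_add c (v j) (w j)
  have Hsc : ∀ (c d : LaurentSeries ℂ) (v : Fin n → LaurentSeries ℂ),
      c • (d • v) = d • (c • v) := fun c d v => funext fun j => mul_left_comm c d (v j)
  have Hneg : ∀ (c : LaurentSeries ℂ) (v : Fin n → LaurentSeries ℂ),
      c • (-v) = -(c • v) := fun c v => funext fun j => mul_neg c (v j)
  have Hsub : ∀ (c d : LaurentSeries ℂ) (v : Fin n → LaurentSeries ℂ),
      (c - d) • v = c • v - d • v := fun c d v => funext fun j => sub_mul c d (v j)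
  have H0 : ∀ (v : Fin n → LaurentSeries ℂ), (0 : LaurentSeries ℂ) • v = 0 :=
    fun v => funext fun j => zero_mul (v j)
  have H1 : ∀ (v : Fin n → LaurentSeries ℂ), (1 : LaurentSeries ℂ) • v = v :=
    fun v => funext fun j => one_mul (v j)
  have Hsum : ∀ (c : LaurentSeries ℂ) (s : Finset ℕ) (f : ℕ → Fin n → LaurentSeries ℂ),
      c • ∑ i ∈ s, f i = ∑ i ∈ s, c • f i := by
    intro c s f
    funext j
    show c * (∑ i ∈ s, f i) j = (∑ i ∈ s, c • f i) j
    rw [Finset.sum_apply, Finset.sum_apply, Finset.mul_sum]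
    exact Finset.sum_congr rfl fun i _ => rfl
  have HsumF : ∀ (c : LaurentSeries ℂ) (f : Fin n → Fin n → LaurentSeries ℂ),
      c • ∑ i : Fin n, f i = ∑ i : Fin n, c • f i := by
    intro c f
    funext j
    show c * (∑ i : Fin n, f i) j = (∑ i : Fin n, c • f i) j
    rw [Finset.sum_apply, Finset.sum_apply, Finset.mul_sum]
    exact Finset.sum_congr rfl fun i _ => rfl
  -- σ on power series is tau17
  have hστ : ∀ f : PowerSeries ℂ,
      σ (HahnSeries.ofPowerSeries ℤ ℂ f) = HahnSeries.ofPowerSeries ℤ ℂ (tau17 q f) := by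
    intro f
    ext k
    rw [hσ]
    obtain (j | j) := k
    · rw [Int.ofNat_eq_coe, HahnSeries.ofPowerSeries_apply_coeff,
        HahnSeries.ofPowerSeries_apply_coeff]
      simp [tau17, zpow_natCast]
    · rw [ofPS_coeff_neg17 _ _ (Int.negSucc_lt_zero j),
        ofPS_coeff_neg17 _ _ (Int.negSucc_lt_zero j), mul_zero]
  -- σ on single
  have hσsingle : ∀ (m : ℤ) (c : ℂ),
      σ (HahnSeries.single m c : LaurentSeries ℂ) = HahnSeries.single m (q ^ m * c) := by
    intro m c
    ext k
    rw [hσ, HahnSeries.coeff_single, HahnSeries.coeff_single]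
    split_ifs with h
    · subst h; rfl
    · rw [mul_zero]
  -- semilinearity of Ψ
  have hΦΨ : ∀ y, Φ y = (HahnSeries.single μ 1 : LaurentSeries ℂ) • Ψ y := by
    intro y
    rw [hΨ, Hss, HahnSeries.single_mul_single, mul_one, add_neg_cancel,
      HahnSeries.single_zero_one, H1]
  have hΨadd : ∀ y z, Ψ (y + z) = Ψ y + Ψ z := by
    intro y z
    rw [hΨ (y + z), hΦadd, Hsa, ← hΨ, ← hΨ]
  have hΨsmul : ∀ (c : LaurentSeries ℂ) y, Ψ (c • y) = σ c • Ψ y := by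
    intro c y
    rw [hΨ (c • y), hΦsmul, Hsc, ← hΨ]
  have hΨsum : ∀ (s : Finset ℕ) (f : ℕ → (Fin n → LaurentSeries ℂ)),
      Ψ (∑ i ∈ s, f i) = ∑ i ∈ s, Ψ (f i) := by
    intro s f
    exact map_sum (AddMonoidHom.mk' Ψ (fun y z => hΨadd y z)) f s
  have hΨn : Ψ^[n] x = -∑ i ∈ Finset.Icc 1 n,
      (HahnSeries.ofPowerSeries ℤ ℂ (a i)) • Ψ^[n - i] x :=
    eq_neg_of_add_eq_zero_left hmin
  -- representation of Ψ^[k] x in the lattice basis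
  have hrep : ∀ k, Ψ^[k] x = ∑ i ∈ Finset.range n,
      (HahnSeries.ofPowerSeries ℤ ℂ (b17 q n a k i)) • Ψ^[i] x := by
    intro k
    induction k with
    | zero =>
      rw [Finset.sum_eq_single_of_mem 0 (Finset.mem_range.2 hn) (fun i _ hne => by
        rw [show b17 q n a 0 i = if i = 0 then 1 else 0 from rfl, if_neg hne, map_zero, H0])]
      rw [show b17 q n a 0 0 = 1 from rfl, map_one, H1]
    | succ k ih =>
      obtain ⟨n', rfl⟩ : ∃ n', n = n' + 1 := ⟨n - 1, by omega⟩
      rw [Function.iterate_succ_apply', ih, hΨsum]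
      have step : ∀ i ∈ Finset.range (n' + 1),
          Ψ ((HahnSeries.ofPowerSeries ℤ ℂ (b17 q (n'+1) a k i)) • Ψ^[i] x)
          = (HahnSeries.ofPowerSeries ℤ ℂ (tau17 q (b17 q (n'+1) a k i))) • Ψ^[i+1] x := by
        intro i _
        rw [hΨsmul, hστ, Function.iterate_succ_apply' Ψ i x]
      rw [Finset.sum_congr rfl step, Finset.sum_range_succ, hΨn, Hneg, Hsum]
      have hre : ∑ j ∈ Finset.Icc 1 (n'+1),
          (HahnSeries.ofPowerSeries ℤ ℂ (tau17 q (b17 q (n'+1) a k n'))) •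
            ((HahnSeries.ofPowerSeries ℤ ℂ (a j)) • Ψ^[n'+1 - j] x)
          = ∑ i ∈ Finset.range (n'+1),
            (HahnSeries.ofPowerSeries ℤ ℂ (tau17 q (b17 q (n'+1) a k n'))
              * HahnSeries.ofPowerSeries ℤ ℂ (a (n'+1 - i))) • Ψ^[i] x := by
        refine Finset.sum_nbij' (fun j => n'+1 - j) (fun i => n'+1 - i) ?_ ?_ ?_ ?_ ?_
        · intro j hj; rw [Finset.mem_Icc] at hj; rw [Finset.mem_range]
          show n' + 1 - j < n' + 1; omega
        · intro i hi; rw [Finset.mem_range] at hi; rw [Finset.mem_Icc]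
          show 1 ≤ n' + 1 - i ∧ n' + 1 - i ≤ n' + 1; omega
        · intro j hj; rw [Finset.mem_Icc] at hj
          show n' + 1 - (n' + 1 - j) = j; omega
        · intro i hi; rw [Finset.mem_range] at hi
          show n' + 1 - (n' + 1 - i) = i; omega
        · intro j hj
          rw [Finset.mem_Icc] at hj
          rw [Hss]
          have h2 : n' + 1 - (n' + 1 - j) = j := by omega
          rw [h2]
      rw [hre]
      have hgoal : ∀ i ∈ Finset.range (n'+1),
          (HahnSeries.ofPowerSeries ℤ ℂ (b17 q (n'+1) a (k+1) i)) • Ψ^[i] x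
          = (if 1 ≤ i then
              HahnSeries.ofPowerSeries ℤ ℂ (tau17 q (b17 q (n'+1) a k (i-1))) else 0) • Ψ^[i] x
            - (HahnSeries.ofPowerSeries ℤ ℂ (tau17 q (b17 q (n'+1) a k n'))
               * HahnSeries.ofPowerSeries ℤ ℂ (a (n'+1 - i))) • Ψ^[i] x := by
        intro i _
        rw [show b17 q (n'+1) a (k+1) i
            = (if 1 ≤ i then tau17 q (b17 q (n'+1) a k (i-1)) else 0)
              - tau17 q (b17 q (n'+1) a k n') * a (n'+1 - i) from rfl]
        rw [map_sub, map_mul, Hsub,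
          apply_ite (HahnSeries.ofPowerSeries ℤ ℂ), map_zero]
      rw [Finset.sum_congr rfl hgoal, Finset.sum_sub_distrib, sub_eq_add_neg]
      congr 1
      rw [Finset.sum_range_succ' (fun i => (if 1 ≤ i then
        HahnSeries.ofPowerSeries ℤ ℂ (tau17 q (b17 q (n'+1) a k (i-1))) else 0) • Ψ^[i] x) n']
      rw [if_neg (by omega), H0, add_zero]
      refine Finset.sum_congr rfl fun i _ => ?_
      rw [if_pos (by omega), Nat.add_sub_cancel]
  -- Fin-version of the representation
  have hrepF : ∀ k, Ψ^[k] x = ∑ i : Fin n,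
      (HahnSeries.ofPowerSeries ℤ ℂ (b17 q n a k (i:ℕ))) • Ψ^[(i:ℕ)] x := by
    intro k
    rw [hrep k]
    exact (Fin.sum_univ_eq_sum_range
      (fun i => (HahnSeries.ofPowerSeries ℤ ℂ (b17 q n a k i)) • Ψ^[i] x) n).symm
  -- nonvanishing of constant coefficients
  have hβ : ∀ k, ∃ i, i < n ∧
      PowerSeries.constantCoeff (b17 q n a k i) ≠ 0 := by
    apply key17 n hn (fun j => PowerSeries.constantCoeff (a j))
      (fun k i => PowerSeries.constantCoeff (b17 q n a k i))
    · intro i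
      rw [show b17 q n a 0 i = if i = 0 then 1 else 0 from rfl]
      rw [apply_ite (PowerSeries.constantCoeff), map_one, map_zero]
    · intro k i
      rw [show b17 q n a (k+1) i
          = (if 1 ≤ i then tau17 q (b17 q n a k (i-1)) else 0)
            - tau17 q (b17 q n a k (n-1)) * a (n - i) from rfl]
      rw [map_sub, map_mul, tau17_const,
        apply_ite (PowerSeries.constantCoeff), map_zero, tau17_const]
    · obtain ⟨j, hj, hne⟩ := hpure
      rw [Finset.mem_Icc] at hj
      exact ⟨j, hj.1, hj.2, hne⟩
  -- iterate formula for Φ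
  have hiter : ∀ k : ℕ, ∃ u : ℂ, u ≠ 0 ∧
      Φ^[k] x = (HahnSeries.single (μ * k) u : LaurentSeries ℂ) • Ψ^[k] x := by
    intro k
    induction k with
    | zero =>
      refine ⟨1, one_ne_zero, ?_⟩
      rw [show μ * ((0:ℕ):ℤ) = 0 by norm_num, HahnSeries.single_zero_one, H1]
      rfl
    | succ k ih =>
      obtain ⟨u, hu, hk⟩ := ih
      refine ⟨q ^ (μ * k) * u, mul_ne_zero (zpow_ne_zero _ hq0) hu, ?_⟩
      have hcast : μ * ((k+1 : ℕ) : ℤ) = μ * (k : ℕ) + μ := by push_cast; ring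
      rw [hcast, Function.iterate_succ_apply' Φ k x, hk, hΦsmul, hσsingle, hΦΨ,
        Function.iterate_succ_apply' Ψ k x, Hss, HahnSeries.single_mul_single, mul_one]
  -- uniqueness of coordinates
  have huniq : ∀ c d : Fin n → LaurentSeries ℂ,
      ∑ i : Fin n, c i • Ψ^[(i:ℕ)] x = ∑ i : Fin n, d i • Ψ^[(i:ℕ)] x → c = d := by
    intro c d h
    funext i
    have hz : ∑ i : Fin n, (c - d) i • Ψ^[(i:ℕ)] x = 0 := by
      calc ∑ i : Fin n, (c - d) i • Ψ^[(i:ℕ)] x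
          = ∑ i : Fin n, (c i • Ψ^[(i:ℕ)] x - d i • Ψ^[(i:ℕ)] x) :=
            Finset.sum_congr rfl fun i _ => by rw [Pi.sub_apply, Hsub]
        _ = (∑ i : Fin n, c i • Ψ^[(i:ℕ)] x) - ∑ i : Fin n, d i • Ψ^[(i:ℕ)] x :=
            Finset.sum_sub_distrib _ _
        _ = 0 := by rw [h, sub_self]
    have := Fintype.linearIndependent_iff.1 hcyc (c - d) hz i
    rw [Pi.sub_apply, sub_eq_zero] at this
    exact this
  -- assemble
  refine ⟨1, by norm_num, fun k => ?_⟩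
  obtain ⟨u, hu, hΦk⟩ := hiter k
  constructor
  · refine ⟨fun i => PowerSeries.X * (PowerSeries.C u * b17 q n a k (i:ℕ)), ?_⟩
    rw [hΦk, hrepF k, HsumF, HsumF]
    refine Finset.sum_congr rfl (fun i _ => ?_)
    rw [Hss, Hss]
    congr 1
    rw [map_mul, map_mul, HahnSeries.ofPowerSeries_X, HahnSeries.ofPowerSeries_C,
      HahnSeries.C_apply, ← mul_assoc, ← mul_assoc, HahnSeries.single_mul_single,
      HahnSeries.single_mul_single]
    rw [show μ * (k:ℤ) - 1 + 1 + 0 = μ * (k:ℤ) by ring, one_mul, one_mul]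
  · rintro ⟨c, hc⟩
    rw [hΦk, hrepF k] at hc
    have hc' : ∑ i : Fin n,
        ((HahnSeries.single (μ * k) u : LaurentSeries ℂ)
          * HahnSeries.ofPowerSeries ℤ ℂ (b17 q n a k (i:ℕ))) • Ψ^[(i:ℕ)] x
        = ∑ i : Fin n,
        ((HahnSeries.single (μ * k + 1) 1 : LaurentSeries ℂ)
          * HahnSeries.ofPowerSeries ℤ ℂ (c i)) • Ψ^[(i:ℕ)] x := by
      calc _ = (HahnSeries.single (μ * k) u : LaurentSeries ℂ) •
            ∑ i : Fin n, (HahnSeries.ofPowerSeries ℤ ℂ (b17 q n a k (i:ℕ))) • Ψ^[(i:ℕ)] x := by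
              rw [HsumF]
              exact Finset.sum_congr rfl (fun i _ => (Hss _ _ _).symm)
        _ = (HahnSeries.single (μ * k + 1) 1 : LaurentSeries ℂ) •
            ∑ i : Fin n, (HahnSeries.ofPowerSeries ℤ ℂ (c i)) • Ψ^[(i:ℕ)] x := hc
        _ = _ := by
              rw [HsumF]
              exact Finset.sum_congr rfl (fun i _ => Hss _ _ _)
    have heq := huniq _ _ hc'
    obtain ⟨i0, hi0, hne⟩ := hβ k
    apply hne
    have h1 := congrFun heq ⟨i0, hi0⟩
    have hcoeff := congrArg (fun y : LaurentSeries ℂ => y.coeff (((0:ℕ):ℤ) + μ * k)) h1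
    simp only at hcoeff
    rw [HahnSeries.coeff_single_mul_add,
      show (((0:ℕ):ℤ)) + μ * k = (-1) + (μ * k + 1) by push_cast; ring,
      HahnSeries.coeff_single_mul_add, one_mul,
      ofPS_coeff_neg17 (c ⟨i0, hi0⟩) (-1) (by norm_num)] at hcoeff
    have h0 : (HahnSeries.ofPowerSeries ℤ ℂ (b17 q n a k i0)).coeff ((0:ℕ):ℤ)
        = PowerSeries.coeff 0 (b17 q n a k i0) :=
      HahnSeries.ofPowerSeries_apply_coeff _ 0
    rw [h0] at hcoeff
    rw [← PowerSeries.coeff_zero_eq_constantCoeff]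
    exact (mul_eq_zero.1 hcoeff).resolve_left hu
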